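/- arXiv:1812.02612 — 7 statements merged into one kernel-verified Lean document; each statement's English description precedes it below -/
import Mathlib

section
/- Let l = 1 + l₁x₁ + ... + lₙxₙ be an affine linear form in R_{≤1}. Then for every polynomial f of degree at most d, the dual polynomial of l^d evaluated at f equals the evaluation of f at the point (l₁,...,lₙ): τ(l^d)(f) = f(l₁,...,lₙ). -/
open MvPolynomial

noncomputable section

variable {k : Type*}

def mBin [Field k] {n : ℕ} (d : ℕ) (α : Fin n →₀ ℕ) : k :=
  (d.factorial : k) /
    (((α.prod fun _ m => m.factorial : ℕ) : k) * ((d - α.sum fun _ m => m).factorial : ℕ))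

/-- The apolar product on polynomials of degree at most `d`. -/
def apolar [Field k] {n : ℕ} (d : ℕ) (f g : MvPolynomial (Fin n) k) : k :=
  ∑ α ∈ f.support, f.coeff α * g.coeff α / mBin d α

section aux

variable [Field k] [CharZero k] {n d : ℕ}

/-- the distinguished multi-index on `Option (Fin n)` extending `β` -/
def kap {n : ℕ} (d : ℕ) (β : Fin n →₀ ℕ) : Option (Fin n) → ℕ :=
  fun o => o.elim (d - β.sum fun _ m => m) β

lemma sum_eq_sum (β : Fin n →₀ ℕ) : (β.sum fun _ m => m) = ∑ i, β i :=
  Finsupp.sum_fintype _ _ fun _ => rfl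

lemma prod_fact_eq (β : Fin n →₀ ℕ) :
    (β.prod fun _ m => m.factorial) = ∏ i, (β i).factorial :=
  Finsupp.prod_fintype _ _ fun _ => rfl

lemma kap_sum (β : Fin n →₀ ℕ) (hβ : (β.sum fun _ m => m) ≤ d) :
    ∑ o : Option (Fin n), kap d β o = d := by
  rw [Fintype.sum_option]
  simp only [kap, Option.elim]
  rw [← sum_eq_sum β]
  omega

lemma mBin_eq_multinomial (β : Fin n →₀ ℕ) (hβ : (β.sum fun _ m => m) ≤ d) :
    mBin d β = ((Nat.multinomial Finset.univ (kap d β) : ℕ) : k) := by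
  have hspec := Nat.multinomial_spec Finset.univ (kap d β)
  rw [kap_sum β hβ] at hspec
  have hprod : ∏ o : Option (Fin n), (kap d β o).factorial
      = (d - β.sum fun _ m => m).factorial * ∏ i, (β i).factorial := by
    rw [Fintype.prod_option]; rfl
  rw [hprod] at hspec
  rw [mBin, prod_fact_eq, div_eq_iff]
  · push_cast [← hspec]; ring
  · exact mul_ne_zero (Nat.cast_ne_zero.mpr
      (Finset.prod_pos fun _ _ => Nat.factorial_pos _).ne')
      (Nat.cast_ne_zero.mpr (Nat.factorial_pos _).ne')

omit [CharZero k] in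
lemma coeff_lin_pow (a : Fin n → k) (β : Fin n →₀ ℕ) (hβ : (β.sum fun _ m => m) ≤ d) :
    coeff β ((1 + ∑ i, C (a i) * X i) ^ d)
      = ((Nat.multinomial Finset.univ (kap d β) : ℕ) : k) * ∏ i, a i ^ β i := by
  have h1 : (1 + ∑ i, C (a i) * X i)
      = ∑ o : Option (Fin n), Option.elim o 1 (fun i => C (a i) * X i) := by
    rw [Fintype.sum_option]
    rfl
  rw [h1, Finset.sum_pow_eq_sum_piAntidiag]
  have hterm : ∀ κ : Option (Fin n) → ℕ,
      ((Nat.multinomial Finset.univ κ : ℕ) : MvPolynomial (Fin n) k) *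
        (∏ o : Option (Fin n), (Option.elim o 1 fun i => C (a i) * X i) ^ κ o)
        = C (((Nat.multinomial Finset.univ κ : ℕ) : k) * ∏ i, a i ^ κ (some i))
            * ∏ i, (X i : MvPolynomial (Fin n) k) ^ κ (some i) := by
    intro κ
    rw [Fintype.prod_option]
    simp only [Option.elim, one_pow, one_mul, mul_pow]
    rw [map_mul, map_prod, ← C_eq_coe_nat]
    simp only [C_pow]
    rw [Finset.prod_mul_distrib]
    ring
  have hcoeff : ∀ κ : Option (Fin n) → ℕ,
      coeff β (∏ i, (X i : MvPolynomial (Fin n) k) ^ κ (some i))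
        = if ∀ i, κ (some i) = β i then 1 else 0 := by
    intro κ
    have : (∏ i, (X i : MvPolynomial (Fin n) k) ^ κ (some i))
        = monomial (Finsupp.equivFunOnFinite.symm fun i => κ (some i)) 1 := by
      rw [monomial_eq, C_1, one_mul,
        Finsupp.prod_fintype _ _ (fun _ => pow_zero _)]
      rfl
    rw [this, coeff_monomial]
    congr 1
    simp only [eq_iff_iff]
    constructor
    · intro h i
      have := DFunLike.congr_fun h i
      simpa using this
    · intro h
      ext i
      simpa using h i
  simp only [hterm]
  rw [coeff_sum]
  simp only [coeff_C_mul, hcoeff]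
  rw [Finset.sum_eq_single (kap d β)]
  · simp [kap]
  · intro κ hκ hne
    rw [if_neg, mul_zero]
    intro h
    apply hne
    simp only [Finset.mem_piAntidiag] at hκ
    funext o
    match o with
    | some i => exact h i
    | none =>
      have hsum := hκ.1
      rw [Fintype.sum_option] at hsum
      have : ∑ i, κ (some i) = ∑ i, β i := Finset.sum_congr rfl fun i _ => h i
      simp only [kap, Option.elim]
      rw [sum_eq_sum β]
      omega
  · intro h
    exfalso
    apply h
    simp only [Finset.mem_piAntidiag]
    exact ⟨kap_sum β hβ, fun _ _ => Finset.mem_univ _⟩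

omit [CharZero k] in
lemma totalDeg_lin_pow (a : Fin n → k) :
    ((1 + ∑ i, C (a i) * X i) ^ d : MvPolynomial (Fin n) k).totalDegree ≤ d := by
  calc ((1 + ∑ i, C (a i) * X i) ^ d : MvPolynomial (Fin n) k).totalDegree
      ≤ d * (1 + ∑ i, C (a i) * X i : MvPolynomial (Fin n) k).totalDegree :=
        totalDegree_pow _ _
    _ ≤ d * 1 := by
        apply Nat.mul_le_mul_left
        apply le_trans (totalDegree_add _ _)
        simp only [totalDegree_one, max_le_iff]
        refine ⟨Nat.zero_le _, ?_⟩
        apply le_trans (totalDegree_finset_sum _ _)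
        apply Finset.sup_le
        intro i _
        calc (C (a i) * X i : MvPolynomial (Fin n) k).totalDegree
            ≤ (C (a i) : MvPolynomial (Fin n) k).totalDegree + (X i : MvPolynomial (Fin n) k).totalDegree := totalDegree_mul _ _
          _ ≤ 1 := by rw [totalDegree_C, totalDegree_X]
    _ = d := mul_one d

end aux

theorem stmt3 [Field k] [CharZero k] {n d : ℕ}
    (a : Fin n → k) (f : MvPolynomial (Fin n) k) (hf : f.totalDegree ≤ d) :
    apolar d ((1 + ∑ i, C (a i) * X i) ^ d) f = eval a f := by
  rw [apolar, eval_eq']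
  have h1 : ∑ β ∈ ((1 + ∑ i, C (a i) * X i) ^ d : MvPolynomial (Fin n) k).support,
        coeff β ((1 + ∑ i, C (a i) * X i) ^ d) * coeff β f / mBin d β
      = ∑ β ∈ ((1 + ∑ i, C (a i) * X i) ^ d : MvPolynomial (Fin n) k).support ∪ f.support,
        coeff β ((1 + ∑ i, C (a i) * X i) ^ d) * coeff β f / mBin d β := by
    apply Finset.sum_subset Finset.subset_union_left
    intro β _ hβ
    rw [notMem_support_iff.mp hβ, zero_mul, zero_div]
  have h2 : ∑ β ∈ f.support, coeff β f * ∏ i, a i ^ β i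
      = ∑ β ∈ ((1 + ∑ i, C (a i) * X i) ^ d : MvPolynomial (Fin n) k).support ∪ f.support,
        coeff β f * ∏ i, a i ^ β i := by
    apply Finset.sum_subset Finset.subset_union_right
    intro β _ hβ
    rw [notMem_support_iff.mp hβ, zero_mul]
  rw [h1, h2]
  apply Finset.sum_congr rfl
  intro β hβu
  have hβd : (β.sum fun _ m => m) ≤ d := by
    rcases Finset.mem_union.mp hβu with h | h
    · exact le_trans (le_totalDegree h) (totalDeg_lin_pow a)
    · exact le_trans (le_totalDegree h) hf
  rw [coeff_lin_pow a β hβd, mBin_eq_multinomial β hβd]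
  have hM : ((Nat.multinomial Finset.univ (kap d β) : ℕ) : k) ≠ 0 :=
    Nat.cast_ne_zero.mpr (Nat.multinomial_pos _ _).ne'
  field_simp

end
end

section
/- Let l = 1 + l₁x₁ + ... + lₙxₙ and g = 1 + g₁x₁ + ... + gₙxₙ be affine linear forms and d ≥ 1 an integer. Then the dual polynomial of l^{d−1}·g, as a functional on R_{≤d}, equals 𝟙_l + (1/d)·𝟙_l ∘ [Σᵢ (gᵢ − lᵢ) ∂/∂xᵢ], i.e. evaluation at (l₁,...,lₙ) plus (1/d) times evaluation at (l₁,...,lₙ) composed with the directional derivative in direction (g₁−l₁,...,gₙ−lₙ). -/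
open MvPolynomial

noncomputable section

variable {k : Type*}

section aux
variable [Field k] [CharZero k] {n : ℕ}

lemma prodFact (α : Fin n →₀ ℕ) :
    (α.prod fun _ m => m.factorial) = ∏ i, (α i).factorial :=
  Finsupp.prod_fintype _ _ (fun _ => rfl)

lemma sumFin (α : Fin n →₀ ℕ) : (α.sum fun _ m => m) = ∑ i, α i :=
  Finsupp.sum_fintype _ _ (fun _ => rfl)

lemma sub_single_sum (α : Fin n →₀ ℕ) (i : Fin n) (h : 1 ≤ α i) :
    (((α - Finsupp.single i 1 : Fin n →₀ ℕ)).sum fun _ m => m) + 1 = α.sum fun _ m => m := by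
  rw [sumFin, sumFin]
  rw [← Finset.add_sum_erase _ _ (Finset.mem_univ i),
      ← Finset.add_sum_erase _ (fun j => α j) (Finset.mem_univ i)]
  have h1 : ∀ j ∈ Finset.univ.erase i, ((α - Finsupp.single i 1 : Fin n →₀ ℕ)) j = α j := by
    intro j hj
    rw [Finsupp.tsub_apply, Finsupp.single_eq_of_ne' (Finset.ne_of_mem_erase hj).symm,
      Nat.sub_zero]
  rw [Finset.sum_congr rfl h1, Finsupp.tsub_apply, Finsupp.single_eq_same]
  have h2 : (Finset.univ.erase i).sum ⇑α = ∑ x ∈ Finset.univ.erase i, α x := rfl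
  omega

lemma sub_single_prodFact (α : Fin n →₀ ℕ) (i : Fin n) (h : 1 ≤ α i) :
    (((α - Finsupp.single i 1 : Fin n →₀ ℕ)).prod fun _ m => m.factorial) * α i
      = α.prod fun _ m => m.factorial := by
  rw [prodFact, prodFact]
  rw [← Finset.mul_prod_erase _ _ (Finset.mem_univ i),
      ← Finset.mul_prod_erase _ (fun j => (α j).factorial) (Finset.mem_univ i)]
  have h1 : ∀ j ∈ Finset.univ.erase i, (((α - Finsupp.single i 1 : Fin n →₀ ℕ)) j).factorial = (α j).factorial := by
    intro j hj
    rw [Finsupp.tsub_apply, Finsupp.single_eq_of_ne' (Finset.ne_of_mem_erase hj).symm,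
      Nat.sub_zero]
  rw [Finset.prod_congr rfl h1, Finsupp.tsub_apply, Finsupp.single_eq_same]
  obtain ⟨c, hc⟩ : ∃ c, α i = c + 1 := ⟨α i - 1, by omega⟩
  rw [hc, Nat.add_sub_cancel, Nat.factorial_succ]
  ring


lemma prod_pow_sub_single (c : Fin n → k) (α : Fin n →₀ ℕ) (i : Fin n) (h : 1 ≤ α i) :
    c i * ∏ j, c j ^ (((α - Finsupp.single i 1 : Fin n →₀ ℕ)) j) = ∏ j, c j ^ α j := by
  rw [← Finset.mul_prod_erase _ (fun j => c j ^ (((α - Finsupp.single i 1 : Fin n →₀ ℕ)) j)) (Finset.mem_univ i),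
      ← Finset.mul_prod_erase _ (fun j => c j ^ α j) (Finset.mem_univ i)]
  have h1 : ∀ j ∈ Finset.univ.erase i, c j ^ (((α - Finsupp.single i 1 : Fin n →₀ ℕ)) j) = c j ^ α j := by
    intro j hj
    rw [Finsupp.tsub_apply, Finsupp.single_eq_of_ne' (Finset.ne_of_mem_erase hj).symm, Nat.sub_zero]
  rw [Finset.prod_congr rfl h1, Finsupp.tsub_apply, Finsupp.single_eq_same]
  obtain ⟨e, he⟩ : ∃ e, α i = e + 1 := ⟨α i - 1, by omega⟩
  rw [he, Nat.add_sub_cancel, pow_succ]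
  ring

lemma factK_ne (m : ℕ) : ((m.factorial : ℕ) : k) ≠ 0 :=
  Nat.cast_ne_zero.mpr m.factorial_ne_zero

lemma prodFactK_ne (α : Fin n →₀ ℕ) : (((α.prod fun _ m => m.factorial : ℕ)) : k) ≠ 0 :=
  Nat.cast_ne_zero.mpr (by
    rw [prodFact]
    exact Finset.prod_ne_zero_iff.mpr fun i _ => (α i).factorial_ne_zero)

lemma mBin_ne_zero (d : ℕ) (α : Fin n →₀ ℕ) : (mBin d α : k) ≠ 0 :=
  div_ne_zero (factK_ne d) (mul_ne_zero (prodFactK_ne α) (factK_ne _))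

lemma factK_pred (d : ℕ) (hd : 1 ≤ d) :
    ((d.factorial : ℕ) : k) = d * ((d-1).factorial : ℕ) := by
  obtain ⟨e, he⟩ : ∃ e, d = e + 1 := ⟨d - 1, by omega⟩
  subst he
  rw [Nat.add_sub_cancel, Nat.factorial_succ]
  push_cast
  ring

lemma R1 (d : ℕ) (hd : 1 ≤ d) (α : Fin n →₀ ℕ) (i : Fin n) (hi : 1 ≤ α i)
    (hs : (α.sum fun _ e => e) ≤ d) :
    (mBin (d-1) (α - Finsupp.single i 1) : k) = mBin d α * (α i : k) / d := by
  unfold mBin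
  have h1 := sub_single_sum α i hi
  have h3 : (d - 1 - ((α - Finsupp.single i 1 : Fin n →₀ ℕ).sum fun _ e => e))
      = d - (α.sum fun _ e => e) := by omega
  rw [h3]
  have h2 : ((((α - Finsupp.single i 1 : Fin n →₀ ℕ).prod fun _ m => m.factorial : ℕ)) : k) * (α i : k)
      = (((α.prod fun _ m => m.factorial : ℕ)) : k) := by
    rw [← Nat.cast_mul, sub_single_prodFact α i hi]
  have h4 := factK_pred (k := k) d hd
  have hdne : (d : k) ≠ 0 := Nat.cast_ne_zero.mpr (by omega)
  have hαi : ((α i : ℕ) : k) ≠ 0 := Nat.cast_ne_zero.mpr (by omega)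
  set A : k := (((d-1).factorial : ℕ) : k) with hA
  set S : k := (((d - (α.sum fun _ e => e)).factorial : ℕ) : k) with hS
  set G : k := ((((α - Finsupp.single i 1 : Fin n →₀ ℕ).prod fun _ m => m.factorial : ℕ)) : k) with hG
  have hGne : G ≠ 0 := prodFactK_ne _
  have hSne : S ≠ 0 := factK_ne _
  rw [h4, ← h2]
  field_simp

lemma R2 (d : ℕ) (hd : 1 ≤ d) (α : Fin n →₀ ℕ) (hs : (α.sum fun _ e => e) ≤ d) :
    (if (α.sum fun _ e => e) ≤ d - 1 then (mBin (d-1) α : k) else 0)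
      = mBin d α * ((d : k) - ((α.sum fun _ e => e) : ℕ)) / d := by
  by_cases h : (α.sum fun _ e => e) ≤ d - 1
  · rw [if_pos h]
    unfold mBin
    set p : ℕ := α.prod fun _ m => m.factorial with hp
    set s0 : ℕ := α.sum fun _ e => e with hs0
    have h3 : (d - s0).factorial = (d - s0) * (d - 1 - s0).factorial := by
      obtain ⟨e, he⟩ : ∃ e, d - s0 = e + 1 := ⟨d - s0 - 1, by omega⟩
      rw [he, Nat.factorial_succ]
      congr 2
      omega
    have h4 := factK_pred (k := k) d hd
    have hdne : (d : k) ≠ 0 := Nat.cast_ne_zero.mpr (by omega)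
    have h5 : ((d : k) - (s0 : k)) = ((d - s0 : ℕ) : k) := (Nat.cast_sub hs).symm
    have h6 : ((d - s0 : ℕ) : k) ≠ 0 := Nat.cast_ne_zero.mpr (by omega)
    have hpne : ((p : ℕ) : k) ≠ 0 := prodFactK_ne α
    have hTne : (((d - 1 - s0).factorial : ℕ) : k) ≠ 0 := factK_ne _
    rw [h5, h3, Nat.cast_mul, h4, div_mul_eq_mul_div, div_div]
    rw [div_eq_div_iff (by apply_rules [mul_ne_zero]) (by apply_rules [mul_ne_zero])]
    ring
  · rw [if_neg h]
    have h6 : (α.sum fun _ e => e) = d := by omega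
    rw [h6]
    simp

lemma coeff_mul_linear (p : MvPolynomial (Fin n) k) (c : Fin n → k) (α : Fin n →₀ ℕ) :
    coeff α (p * (1 + ∑ i, C (c i) * X i)) =
      coeff α p + ∑ i, c i * (if α i ≠ 0 then coeff (α - Finsupp.single i 1) p else 0) := by
  rw [mul_add, mul_one, coeff_add, Finset.mul_sum, coeff_sum]
  congr 1
  apply Finset.sum_congr rfl
  intro i _
  have h : p * (C (c i) * X i) = C (c i) * (p * X i) := by ring
  rw [h, coeff_C_mul, coeff_mul_X']
  congr 1
  simp [Finsupp.mem_support_iff]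

lemma sum_zero_iff (α : Fin n →₀ ℕ) : (α.sum fun _ e => e) = 0 ↔ α = 0 := by
  rw [sumFin]
  constructor
  · intro h
    ext j
    have := Finset.sum_eq_zero_iff.mp h j (Finset.mem_univ j)
    simpa using this
  · intro h
    simp [h]

lemma coeff_lin_pow_s5 (c : Fin n → k) (m : ℕ) (α : Fin n →₀ ℕ) :
    coeff α ((1 + ∑ i, C (c i) * X i) ^ m) =
      if (α.sum fun _ e => e) ≤ m then mBin m α * ∏ i, c i ^ α i else 0 := by
  induction m generalizing α with
  | zero =>
    rw [pow_zero, coeff_one]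
    by_cases h : α = 0
    · subst h
      simp [mBin]
    · rw [if_neg (by simpa [eq_comm] using h), if_neg (by
        intro hle
        exact h ((sum_zero_iff α).mp (Nat.le_zero.mp hle)))]
  | succ m ih =>
    rw [pow_succ, coeff_mul_linear, ih]
    by_cases hcase : (α.sum fun _ e => e) ≤ m + 1
    · rw [if_pos hcase]
      have hm1 : ((m : k) + 1) ≠ 0 := by
        have : ((m+1 : ℕ) : k) ≠ 0 := Nat.cast_ne_zero.mpr (by omega)
        push_cast at this
        exact this
      have hterm : ∀ i : Fin n,
          c i * (if α i ≠ 0 then coeff (α - Finsupp.single i 1) ((1 + ∑ i, C (c i) * X i) ^ m) else 0)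
          = mBin (m+1) α * (α i : k) / (m+1) * ∏ j, c j ^ α j := by
        intro i
        by_cases hi : α i = 0
        · rw [if_neg (by simpa using hi), hi]
          simp
        · have hi1 : 1 ≤ α i := by omega
          rw [if_pos hi, ih]
          have hsub : ((α - Finsupp.single i 1 : Fin n →₀ ℕ).sum fun _ e => e) ≤ m := by
            have := sub_single_sum α i hi1
            omega
          rw [if_pos hsub]
          have hR1 := R1 (k := k) (m+1) (by omega) α i hi1 hcase
          rw [Nat.add_sub_cancel] at hR1
          rw [Nat.cast_add, Nat.cast_one] at hR1
          rw [hR1]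
          linear_combination (mBin (m+1) α * (α i : k) / ((m:k)+1)) * (prod_pow_sub_single c α i hi1)
      rw [Finset.sum_congr rfl (fun i _ => hterm i)]
      have hR2 := R2 (k := k) (m+1) (by omega) α hcase
      rw [Nat.add_sub_cancel] at hR2
      have hpull : (if (α.sum fun x e => e) ≤ m then mBin m α * ∏ i, c i ^ α i else 0)
          = (if (α.sum fun x e => e) ≤ m then (mBin m α : k) else 0) * ∏ i, c i ^ α i := by
        split <;> simp
      have hsum : (∑ i, (α i : ℕ)) = α.sum fun _ e => e := (sumFin α).symm
      rw [hpull, hR2, ← Finset.sum_mul, ← Finset.sum_div, ← Finset.mul_sum, ← Nat.cast_sum, hsum]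
      set s0 : ℕ := α.sum fun _ e => e with hs0
      rw [Nat.cast_add, Nat.cast_one]
      field_simp
      ring
    · rw [if_neg hcase, if_neg (by omega)]
      rw [Finset.sum_eq_zero, add_zero]
      intro i _
      by_cases hi : α i = 0
      · rw [if_neg (by simpa using hi), mul_zero]
      · have hi1 : 1 ≤ α i := by omega
        rw [if_pos hi, ih, if_neg (by
          have := sub_single_sum α i hi1
          omega), mul_zero]

lemma apolar_swap (d : ℕ) (p q : MvPolynomial (Fin n) k) :
    apolar d p q = ∑ α ∈ q.support, p.coeff α * q.coeff α / mBin d α := by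
  unfold apolar
  rw [Finset.sum_subset (Finset.subset_union_left (s₂ := q.support))
      (fun α _ hα => by rw [MvPolynomial.notMem_support_iff.mp hα]; simp),
    ← Finset.sum_subset (Finset.subset_union_right (s₁ := p.support))
      (fun α _ hα => by rw [MvPolynomial.notMem_support_iff.mp hα]; simp)]

lemma eval_pderiv (a : Fin n → k) (f : MvPolynomial (Fin n) k) (i : Fin n) :
    eval a (pderiv i f) = ∑ α ∈ f.support,
      f.coeff α * (α i : k) * ∏ j, a j ^ (((α - Finsupp.single i 1 : Fin n →₀ ℕ)) j) := by
  conv_lhs => rw [f.as_sum]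
  rw [map_sum (pderiv i), map_sum (eval a)]
  apply Finset.sum_congr rfl
  intro α _
  rw [pderiv_monomial, eval_monomial, Finsupp.prod_pow]

end aux

theorem stmt5 [Field k] [CharZero k] {n d : ℕ} (hd : 1 ≤ d)
    (a b : Fin n → k) (f : MvPolynomial (Fin n) k) (hf : f.totalDegree ≤ d) :
    apolar d ((1 + ∑ i, C (a i) * X i) ^ (d - 1) * (1 + ∑ i, C (b i) * X i)) f =
      eval a f + (d : k)⁻¹ * ∑ i, (b i - a i) * eval a (pderiv i f) := by
  have hdne : (d : k) ≠ 0 := Nat.cast_ne_zero.mpr (by omega)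
  have key : ∀ α ∈ f.support,
      coeff α ((1 + ∑ i, C (a i) * X i) ^ (d - 1) * (1 + ∑ i, C (b i) * X i))
      = mBin d α * (∏ j, a j ^ α j + (d:k)⁻¹ * ∑ i, (b i - a i) * (α i : k) *
          ∏ j, a j ^ (((α - Finsupp.single i 1 : Fin n →₀ ℕ)) j)) := by
    intro α hα
    have hs : (α.sum fun _ e => e) ≤ d := le_trans (le_totalDegree hα) hf
    rw [coeff_mul_linear, coeff_lin_pow_s5]
    have h1 : (if (α.sum fun _ e => e) ≤ d - 1 then mBin (d-1) α * ∏ i, a i ^ α i else 0)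
        = mBin d α * ((d:k) - ((α.sum fun _ e => e) : ℕ)) / d * ∏ i, a i ^ α i := by
      have hpull : (if (α.sum fun _ e => e) ≤ d - 1 then (mBin (d-1) α : k) * ∏ i, a i ^ α i else 0)
          = (if (α.sum fun _ e => e) ≤ d - 1 then (mBin (d-1) α : k) else 0) * ∏ i, a i ^ α i := by
        split <;> simp
      rw [hpull, R2 d hd α hs]
    have h2 : ∀ i : Fin n, b i * (if α i ≠ 0 then
          coeff (α - Finsupp.single i 1) ((1 + ∑ i, C (a i) * X i) ^ (d-1)) else 0)
        = b i * (mBin d α * (α i : k) / d) *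
            ∏ j, a j ^ (((α - Finsupp.single i 1 : Fin n →₀ ℕ)) j) := by
      intro i
      by_cases hi : α i = 0
      · rw [if_neg (by simpa using hi), hi]
        simp
      · have hi1 : 1 ≤ α i := by omega
        rw [if_pos hi, coeff_lin_pow_s5, if_pos (by
          have := sub_single_sum α i hi1
          omega)]
        rw [R1 d hd α i hi1 hs]
        ring
    rw [h1, Finset.sum_congr rfl (fun i _ => h2 i)]
    have haux : ∑ i, a i * (α i : k) * ∏ j, a j ^ (((α - Finsupp.single i 1 : Fin n →₀ ℕ)) j)
        = (((α.sum fun _ e => e) : ℕ) : k) * ∏ j, a j ^ α j := by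
      have hterm : ∀ i ∈ Finset.univ, a i * (α i : k) *
            ∏ j, a j ^ (((α - Finsupp.single i 1 : Fin n →₀ ℕ)) j)
          = (α i : k) * ∏ j, a j ^ α j := by
        intro i _
        by_cases hi : α i = 0
        · rw [hi]; simp
        · have hi1 : 1 ≤ α i := by omega
          rw [← prod_pow_sub_single a α i hi1]
          ring
      rw [Finset.sum_congr rfl hterm, ← Finset.sum_mul, ← Nat.cast_sum]
      congr 2
      exact (sumFin α).symm
    have hsplit : ∑ i, (b i - a i) * (α i : k) *
          ∏ j, a j ^ (((α - Finsupp.single i 1 : Fin n →₀ ℕ)) j)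
        = (∑ i, b i * (α i : k) * ∏ j, a j ^ (((α - Finsupp.single i 1 : Fin n →₀ ℕ)) j))
          - (((α.sum fun _ e => e) : ℕ) : k) * ∏ j, a j ^ α j := by
      rw [← haux, ← Finset.sum_sub_distrib]
      apply Finset.sum_congr rfl
      intro i _
      ring
    rw [hsplit]
    have hpullsum : ∑ i, b i * (mBin d α * (α i : k) / d) *
          ∏ j, a j ^ (((α - Finsupp.single i 1 : Fin n →₀ ℕ)) j)
        = mBin d α / d * ∑ i, b i * (α i : k) *
            ∏ j, a j ^ (((α - Finsupp.single i 1 : Fin n →₀ ℕ)) j) := by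
      rw [Finset.mul_sum]
      apply Finset.sum_congr rfl
      intro i _
      ring
    rw [hpullsum]
    field_simp
    ring
  rw [apolar_swap]
  have hstep : ∀ α ∈ f.support,
      coeff α ((1 + ∑ i, C (a i) * X i) ^ (d - 1) * (1 + ∑ i, C (b i) * X i)) * f.coeff α / mBin d α
      = f.coeff α * (∏ j, a j ^ α j + (d:k)⁻¹ * ∑ i, (b i - a i) * (α i : k) *
          ∏ j, a j ^ (((α - Finsupp.single i 1 : Fin n →₀ ℕ)) j)) := by
    intro α hα
    rw [key α hα]
    have hm := mBin_ne_zero (k := k) d α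
    field_simp
  rw [Finset.sum_congr rfl hstep]
  rw [eval_eq' a f]
  have hev : ∀ i ∈ Finset.univ, (b i - a i) * eval a (pderiv i f)
      = ∑ α ∈ f.support, (b i - a i) * (f.coeff α * (α i : k) *
          ∏ j, a j ^ (((α - Finsupp.single i 1 : Fin n →₀ ℕ)) j)) := by
    intro i _
    rw [eval_pderiv, Finset.mul_sum]
  rw [Finset.sum_congr rfl hev, Finset.sum_comm, Finset.mul_sum, ← Finset.sum_add_distrib]
  apply Finset.sum_congr rfl
  intro α _
  rw [Finset.mul_sum, Finset.mul_sum, mul_add]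
  congr 1
  rw [Finset.mul_sum]
  apply Finset.sum_congr rfl
  intro i _
  ring

end
end

section
/- Let I ⊆ R = k[x₁,...,xₙ] be a zero-dimensional ideal with variety V(I) = {ζ₁,...,ζ_d} ⊆ kⁿ (k algebraically closed). Then for every a ∈ A = R/I, the set of eigenvalues of the multiplication operator M_a : A → A equals {a(ζ₁),...,a(ζ_d)}. -/
open MvPolynomial

noncomputable section

variable {k : Type*}

set_option maxHeartbeats 1000000 in
theorem stmt7 [Field k] [IsAlgClosed k] [CharZero k] {n d : ℕ}
    (I : Ideal (MvPolynomial (Fin n) k)) (hI : I ≠ ⊤)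
    (hfin : FiniteDimensional k (MvPolynomial (Fin n) k ⧸ I))
    (ζ : Fin d → (Fin n → k))
    (hV : {x : Fin n → k | ∀ f ∈ I, eval x f = 0} = Set.range ζ)
    (a : MvPolynomial (Fin n) k) (μ : k) :
    Module.End.HasEigenvalue
        (LinearMap.mulLeft k (Ideal.Quotient.mk I a) :
          Module.End k (MvPolynomial (Fin n) k ⧸ I)) μ ↔
      ∃ i, eval (ζ i) a = μ := by
  set f : Module.End k (MvPolynomial (Fin n) k ⧸ I) :=
    LinearMap.mulLeft k (Ideal.Quotient.mk I a) with hf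
  constructor
  · intro h
    obtain ⟨v, hv⟩ := h.exists_hasEigenvector
    have hv0 : v ≠ 0 := hv.2
    have heq : (Ideal.Quotient.mk I (a - C μ)) * v = 0 := by
      have h1 : f v = μ • v := hv.apply_eq_smul
      have h2 : (Ideal.Quotient.mk I a) * v = μ • v := h1
      obtain ⟨w, rfl⟩ := Ideal.Quotient.mk_surjective v
      have h3 : (Ideal.Quotient.mk I (C μ)) * (Ideal.Quotient.mk I w)
          = μ • (Ideal.Quotient.mk I w) := by
        rw [← map_mul, ← MvPolynomial.smul_eq_C_mul,
          ← Ideal.Quotient.mkₐ_eq_mk (R₁ := k), map_smul]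
      rw [map_sub, sub_mul, h2, h3, sub_self]
    by_contra hc
    push_neg at hc
    have hJ : I ⊔ Ideal.span {a - C μ} = ⊤ := by
      by_contra hJ
      have hne : (MvPolynomial.zeroLocus k (I ⊔ Ideal.span {a - C μ})).Nonempty := by
        rw [Set.nonempty_iff_ne_empty]
        intro he
        apply hJ
        have hr := MvPolynomial.vanishingIdeal_zeroLocus_eq_radical (K := k)
          (I ⊔ Ideal.span {a - C μ})
        rw [he, MvPolynomial.vanishingIdeal_empty] at hr
        exact Ideal.radical_eq_top.mp hr.symm
      obtain ⟨x, hx⟩ := hne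
      have hxI : x ∈ {x : Fin n → k | ∀ f ∈ I, eval x f = 0} := by
        intro p hp
        exact hx p (Ideal.mem_sup_left hp)
      rw [hV] at hxI
      obtain ⟨i, rfl⟩ := hxI
      have hax : eval (ζ i) (a - C μ) = 0 :=
        hx _ (Ideal.mem_sup_right (Ideal.subset_span rfl))
      apply hc i
      have := hax
      rw [map_sub, eval_C, sub_eq_zero] at this
      exact this
    -- obtain an inverse of (a - C μ) mod I
    have h1 : (1 : MvPolynomial (Fin n) k) ∈ I ⊔ Ideal.span {a - C μ} := by
      rw [hJ]; trivial
    rw [Submodule.mem_sup] at h1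
    obtain ⟨p, hp, q, hq, hpq⟩ := h1
    rw [Ideal.mem_span_singleton] at hq
    obtain ⟨c, rfl⟩ := hq
    apply hv0
    have key : (Ideal.Quotient.mk I c) * ((Ideal.Quotient.mk I (a - C μ)) * v) = v := by
      have hac : (a - C μ) * c = 1 - p := by linear_combination hpq
      rw [← mul_assoc, ← map_mul, mul_comm c (a - C μ), hac, map_sub, map_one,
        Ideal.Quotient.eq_zero_iff_mem.mpr hp, sub_zero, one_mul]
    rw [← key, heq, mul_zero]
  · rintro ⟨i, hi⟩
    have hζ : ζ i ∈ {x : Fin n → k | ∀ f ∈ I, eval x f = 0} := by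
      rw [hV]; exact Set.mem_range_self i
    let φ : (MvPolynomial (Fin n) k ⧸ I) →+* k :=
      Ideal.Quotient.lift I (MvPolynomial.eval (ζ i)) (fun p hp => hζ p hp)
    set L : Module.End k (MvPolynomial (Fin n) k ⧸ I) := f - μ • 1 with hL
    have hnotinj : ¬ Function.Injective L := by
      intro hinj
      obtain ⟨b, hb⟩ := (LinearMap.injective_iff_surjective).mp hinj 1
      obtain ⟨w, rfl⟩ := Ideal.Quotient.mk_surjective b
      have hs : μ • (Ideal.Quotient.mk I w) = Ideal.Quotient.mk I (C μ * w) := by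
        rw [← MvPolynomial.smul_eq_C_mul, ← Ideal.Quotient.mkₐ_eq_mk (R₁ := k), map_smul]
      have hLb : L (Ideal.Quotient.mk I w) = Ideal.Quotient.mk I (a * w - C μ * w) := by
        rw [hL, LinearMap.sub_apply, LinearMap.smul_apply, Module.End.one_apply, hf,
          LinearMap.mulLeft_apply, hs, ← map_mul, ← map_sub]
      have h0 : MvPolynomial.eval (ζ i) (a * w - C μ * w) = 0 := by
        rw [map_sub, map_mul, map_mul, eval_C, hi]; ring
      have h1 : φ (L (Ideal.Quotient.mk I w)) = 0 := by
        rw [hLb]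
        exact (Ideal.Quotient.lift_mk I _ _).trans h0
      rw [hb, map_one] at h1
      exact one_ne_zero h1
    rw [← LinearMap.ker_eq_bot] at hnotinj
    obtain ⟨v, hvmem, hv0⟩ := Submodule.exists_mem_ne_zero_of_ne_bot hnotinj
    refine Module.End.hasEigenvalue_of_hasEigenvector ⟨?_, hv0⟩
    rw [Module.End.mem_eigenspace_iff]
    have := hvmem
    rw [LinearMap.mem_ker, hL, LinearMap.sub_apply, LinearMap.smul_apply,
      Module.End.one_apply, sub_eq_zero] at this
    exact this

end
end

section
/- Let I ⊆ R = k[x₁,...,xₙ] be a zero-dimensional ideal with V(I) = {ζ₁,...,ζ_d}. An element v ∈ (R/I)* is a common eigenvector of all the transpose multiplication operators M_{x₁}^t,...,M_{xₙ}^t if and only if v = c·𝟙_{ζⱼ} for some j ∈ {1,...,d} and some nonzero scalar c ∈ k, where 𝟙_{ζⱼ} is the evaluation functional at ζⱼ restricted to R/I. -/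
open MvPolynomial

noncomputable section

variable {k : Type*}

set_option maxHeartbeats 1000000 in
set_option synthInstance.maxHeartbeats 400000 in
theorem stmt8 [Field k] [IsAlgClosed k] [CharZero k] {n d : ℕ}
    (I : Ideal (MvPolynomial (Fin n) k))
    (hfin : FiniteDimensional k (MvPolynomial (Fin n) k ⧸ I))
    (ζ : Fin d → (Fin n → k))
    (hV : {x : Fin n → k | ∀ f ∈ I, eval x f = 0} = Set.range ζ)
    (v : Module.Dual k (MvPolynomial (Fin n) k ⧸ I)) :
    (v ≠ 0 ∧ ∀ j : Fin n, ∃ μ : k,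
        v ∘ₗ LinearMap.mulLeft k (Ideal.Quotient.mk I (X j)) = μ • v) ↔
      ∃ (i : Fin d) (c : k), c ≠ 0 ∧
        ∀ f : MvPolynomial (Fin n) k, v (Ideal.Quotient.mk I f) = c * eval (ζ i) f := by
  constructor
  · rintro ⟨hv, hev⟩
    choose μ hμ using hev
    set c := v (Ideal.Quotient.mk I 1) with hc
    have key : ∀ f : MvPolynomial (Fin n) k,
        v (Ideal.Quotient.mk I f) = c * eval μ f := by
      intro f
      induction f using MvPolynomial.induction_on with
      | C a =>
        have h1 : Ideal.Quotient.mk I (C a : MvPolynomial (Fin n) k)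
            = a • Ideal.Quotient.mk I 1 := by
          rw [← mul_one (C a), ← smul_eq_C_mul, ← Ideal.Quotient.mkₐ_eq_mk k I,
            map_smul, Ideal.Quotient.mkₐ_eq_mk]
        rw [h1, map_smul]
        simp [hc, mul_comm]
      | add p q hp hq =>
        rw [map_add, map_add, hp, hq, map_add]
        ring
      | mul_X p j hp =>
        have h2 := LinearMap.congr_fun (hμ j) (Ideal.Quotient.mk I p)
        simp only [LinearMap.comp_apply, LinearMap.mulLeft_apply,
          LinearMap.smul_apply, smul_eq_mul, ← map_mul] at h2
        rw [show X j * p = p * X j from mul_comm _ _] at h2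
        rw [h2, hp]
        simp [eval_mul]
        ring
    have hc0 : c ≠ 0 := by
      intro h0
      apply hv
      ext x
      obtain ⟨f, rfl⟩ := Ideal.Quotient.mk_surjective x
      simp [key f, h0]
    have hμV : μ ∈ {x : Fin n → k | ∀ f ∈ I, eval x f = 0} := by
      intro f hf
      have : v (Ideal.Quotient.mk I f) = 0 := by
        rw [Ideal.Quotient.eq_zero_iff_mem.mpr hf, map_zero]
      rw [key f] at this
      exact (mul_eq_zero.mp this).resolve_left hc0
    rw [hV] at hμV
    obtain ⟨i, hi⟩ := hμV
    exact ⟨i, c, hc0, fun f => by rw [key f, hi]⟩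
  · rintro ⟨i, c, hc0, h⟩
    constructor
    · intro h0
      have := h 1
      rw [h0] at this
      simp at this
      exact hc0 this.symm
    · intro j
      refine ⟨ζ i j, LinearMap.ext fun x => ?_⟩
      obtain ⟨f, rfl⟩ := Ideal.Quotient.mk_surjective x
      simp only [LinearMap.comp_apply, LinearMap.mulLeft_apply,
        LinearMap.smul_apply, smul_eq_mul, ← map_mul]
      rw [h (X j * f), h f]
      simp [eval_mul]
      ring

end
end

section
/- Let Λ ∈ R*. The following are equivalent: (i) there exist nonzero scalars λ₁,...,λ_r ∈ k and distinct points ζ₁,...,ζ_r ∈ kⁿ such that Λ = Σᵢ λᵢ 𝟙_{ζᵢ} (a linear combination of evaluation functionals); (ii) the Hankel operator H_Λ has rank r and the ideal I_Λ = ker H_Λ is radical. -/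
open MvPolynomial
noncomputable section
variable {k : Type*}

def hankelKer [Field k] {n : ℕ} (Λ : Module.Dual k (MvPolynomial (Fin n) k)) :
    Ideal (MvPolynomial (Fin n) k) where
  carrier := {f | ∀ g, Λ (f * g) = 0}
  zero_mem' := by intro g; simp
  add_mem' := by
    intro a b ha hb g
    rw [add_mul, map_add, ha g, hb g, add_zero]
  smul_mem' := by
    intro c f hf g
    simp only [smul_eq_mul, Set.mem_setOf_eq] at *
    rw [mul_comm c f, mul_assoc]
    exact hf _

def evalDual [CommSemiring k] {n : ℕ} (ζ : Fin n → k) :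
    Module.Dual k (MvPolynomial (Fin n) k) := (aeval ζ).toLinearMap

def hankelMap [CommSemiring k] {n : ℕ} (Λ : Module.Dual k (MvPolynomial (Fin n) k)) :
    MvPolynomial (Fin n) k →ₗ[k] Module.Dual k (MvPolynomial (Fin n) k) where
  toFun f := Λ ∘ₗ LinearMap.mulLeft k f
  map_add' f g := by ext h; simp [add_mul]
  map_smul' c f := by ext h; simp [smul_mul_assoc]

section Aux
variable [Field k] {n : ℕ}

lemma hankelMap_apply (Λ : Module.Dual k (MvPolynomial (Fin n) k)) (f g : MvPolynomial (Fin n) k) :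
    hankelMap Λ f g = Λ (f * g) := rfl

lemma mem_hankelKer_iff (Λ : Module.Dual k (MvPolynomial (Fin n) k)) (f : MvPolynomial (Fin n) k) :
    f ∈ hankelKer Λ ↔ ∀ g, Λ (f * g) = 0 := Iff.rfl

lemma mem_ker_hankelMap_iff (Λ : Module.Dual k (MvPolynomial (Fin n) k))
    (f : MvPolynomial (Fin n) k) :
    f ∈ LinearMap.ker (hankelMap Λ) ↔ ∀ g, Λ (f * g) = 0 := by
  rw [LinearMap.mem_ker, LinearMap.ext_iff]
  simp [hankelMap_apply]

set_option synthInstance.maxHeartbeats 1000000 in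
set_option maxHeartbeats 1000000 in
/-- rank of the Hankel map equals the dimension of the quotient by its kernel ideal. -/
lemma rank_hankelMap_eq (Λ : Module.Dual k (MvPolynomial (Fin n) k)) :
    LinearMap.rank (hankelMap Λ) =
      Module.rank k (MvPolynomial (Fin n) k ⧸ hankelKer Λ) := by
  classical
  set I := hankelKer Λ
  let π := (Ideal.Quotient.mkₐ k I).toLinearMap
  have hπsurj : Function.Surjective π := Ideal.Quotient.mk_surjective
  have hker : LinearMap.ker π = LinearMap.ker (hankelMap Λ) := by
    ext f
    rw [LinearMap.mem_ker, mem_ker_hankelMap_iff]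
    show Ideal.Quotient.mk I f = 0 ↔ _
    rw [Ideal.Quotient.eq_zero_iff_mem]
    exact mem_hankelKer_iff Λ f
  have e2 : (MvPolynomial (Fin n) k ⧸ LinearMap.ker (hankelMap Λ)) ≃ₗ[k]
      (MvPolynomial (Fin n) k ⧸ I) := by
    rw [← hker]
    exact π.quotKerEquivOfSurjective hπsurj
  have e1 : (↥(LinearMap.range (hankelMap Λ)) : Type _) ≃ₗ[k]
      (MvPolynomial (Fin n) k ⧸ LinearMap.ker (hankelMap Λ)) :=
    (hankelMap Λ).quotKerEquivRange.symm
  exact LinearEquiv.rank_eq (R := k) (M := ↥(LinearMap.range (hankelMap Λ)))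
    (M₁ := MvPolynomial (Fin n) k ⧸ I) (e1.trans e2)

/-- interpolation polynomials at distinct points -/
lemma exists_interp {r : ℕ} (ζ : Fin r → (Fin n → k)) (hinj : Function.Injective ζ) :
    ∃ e : Fin r → MvPolynomial (Fin n) k,
      ∀ i j, aeval (ζ j) (e i) = if j = i then 1 else 0 := by
  classical
  have sep : ∀ i j : Fin r, ∃ p : MvPolynomial (Fin n) k,
      i ≠ j → aeval (ζ i) p = 1 ∧ aeval (ζ j) p = 0 := by
    intro i j
    by_cases hij : i = j
    · exact ⟨1, fun h => absurd hij h⟩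
    · obtain ⟨t, ht⟩ := Function.ne_iff.mp (hinj.ne hij)
      refine ⟨C (ζ i t - ζ j t)⁻¹ * (X t - C (ζ j t)), fun _ => ⟨?_, ?_⟩⟩
      · simp [inv_mul_cancel₀ (sub_ne_zero.mpr ht)]
      · simp
  choose p hp using sep
  refine ⟨fun i => ∏ j ∈ Finset.univ.erase i, p i j, fun i j => ?_⟩
  rw [map_prod]
  by_cases hji : j = i
  · subst hji
    rw [if_pos rfl]
    apply Finset.prod_eq_one
    intro l hl
    exact (hp j l (Finset.ne_of_mem_erase hl).symm).1
  · rw [if_neg hji]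
    exact Finset.prod_eq_zero (Finset.mem_erase.mpr ⟨hji, Finset.mem_univ j⟩)
      (hp i j fun h => hji h.symm).2

end Aux

section Main
variable [Field k] [IsAlgClosed k] [CharZero k] {n : ℕ}

set_option maxHeartbeats 1000000 in
set_option synthInstance.maxHeartbeats 1000000 in
lemma forward_dir {r : ℕ} (Λ : Module.Dual k (MvPolynomial (Fin n) k))
    (ζ : Fin r → (Fin n → k)) (lam : Fin r → k) (hinj : Function.Injective ζ)
    (hlam : ∀ i, lam i ≠ 0) (hΛ : Λ = ∑ i, lam i • evalDual (ζ i)) :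
    LinearMap.rank (hankelMap Λ) = r ∧ (hankelKer Λ).IsRadical := by
  classical
  obtain ⟨e, he⟩ := exists_interp ζ hinj
  have hΛ' : ∀ h, Λ h = ∑ i, lam i * aeval (ζ i) h := by
    intro h; rw [hΛ]; simp [evalDual]
  have hker : ∀ f, (∀ g, Λ (f * g) = 0) ↔ ∀ i, aeval (ζ i) f = 0 := by
    intro f
    constructor
    · intro hf i
      have h1 := hf (e i)
      rw [hΛ'] at h1
      have h2 : ∑ j, lam j * aeval (ζ j) (f * e i) = lam i * aeval (ζ i) f := by
        rw [Finset.sum_eq_single i]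
        · rw [map_mul, he i i, if_pos rfl, mul_one]
        · intro j _ hji
          rw [map_mul, he i j, if_neg hji, mul_zero, mul_zero]
        · intro h; exact absurd (Finset.mem_univ i) h
      rw [h2] at h1
      exact (mul_eq_zero.mp h1).resolve_left (hlam i)
    · intro hf g
      rw [hΛ']
      apply Finset.sum_eq_zero
      intro j _
      rw [map_mul, hf j, zero_mul, mul_zero]
  constructor
  · -- rank
    let L : MvPolynomial (Fin n) k →ₗ[k] (Fin r → k) :=
      LinearMap.pi (fun i => evalDual (ζ i))
    have hLker : LinearMap.ker (hankelMap Λ) = LinearMap.ker L := by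
      ext f
      rw [mem_ker_hankelMap_iff, LinearMap.mem_ker, hker f]
      constructor
      · intro h; funext i; exact h i
      · intro h i; exact congrFun h i
    have hLsurj : Function.Surjective L := by
      intro v
      refine ⟨∑ i, v i • e i, ?_⟩
      funext j
      show evalDual (ζ j) (∑ i, v i • e i) = v j
      rw [map_sum]
      simp only [map_smul, smul_eq_mul]
      show ∑ i, v i * aeval (ζ j) (e i) = v j
      rw [Finset.sum_eq_single j]
      · rw [he j j, if_pos rfl, mul_one]
      · intro i _ hij; rw [he i j, if_neg (Ne.symm hij), mul_zero]
      · intro h; exact absurd (Finset.mem_univ j) h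
    have e1 : (↥(LinearMap.range (hankelMap Λ)) : Type _) ≃ₗ[k]
        (MvPolynomial (Fin n) k ⧸ LinearMap.ker (hankelMap Λ)) :=
      (hankelMap Λ).quotKerEquivRange.symm
    have e2 : (MvPolynomial (Fin n) k ⧸ LinearMap.ker (hankelMap Λ)) ≃ₗ[k] (Fin r → k) := by
      rw [hLker]
      exact L.quotKerEquivOfSurjective hLsurj
    have h3 : LinearMap.rank (hankelMap Λ) = Module.rank k (Fin r → k) :=
      LinearEquiv.rank_eq (R := k) (M := ↥(LinearMap.range (hankelMap Λ)))
        (M₁ := Fin r → k) (e1.trans e2)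
    rw [h3, rank_fin_fun]
  · -- radical
    intro f hf
    obtain ⟨m, hm⟩ := hf
    rcases Nat.eq_zero_or_pos m with h0 | hpos
    · subst h0
      rw [pow_zero] at hm
      have : hankelKer Λ = ⊤ := (Ideal.eq_top_iff_one _).mpr hm
      rw [this]; trivial
    · rw [mem_hankelKer_iff, hker]
      intro i
      have h1 : aeval (ζ i) (f ^ m) = 0 := (hker (f ^ m)).mp ((mem_hankelKer_iff _ _).mp hm) i
      rw [map_pow] at h1
      exact pow_eq_zero_iff hpos.ne' |>.mp h1

set_option maxHeartbeats 2000000 in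
set_option synthInstance.maxHeartbeats 1000000 in
lemma backward_dir {r : ℕ} (Λ : Module.Dual k (MvPolynomial (Fin n) k))
    (hrank : LinearMap.rank (hankelMap Λ) = r) (hrad : (hankelKer Λ).IsRadical) :
    ∃ (ζ : Fin r → (Fin n → k)) (lam : Fin r → k), Function.Injective ζ ∧
      (∀ i, lam i ≠ 0) ∧ Λ = ∑ i, lam i • evalDual (ζ i) := by
  classical
  set I := hankelKer Λ with hI
  set A := MvPolynomial (Fin n) k ⧸ I with hA
  have hrankA : Module.rank k A = r := by rw [← rank_hankelMap_eq, hrank]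
  haveI : Module.Finite k A := Module.finite_of_rank_eq_nat hrankA
  have hfinA : Module.finrank k A = r := Module.finrank_eq_of_rank_eq hrankA
  haveI : IsReduced A := (Ideal.isRadical_iff_quotient_reduced I).mp hrad
  haveI : IsArtinianRing A := isArtinian_of_tower k inferInstance
  haveI : Finite {m : Ideal A | m.IsMaximal} := (IsArtinianRing.setOfPred_isMaximal_finite A).to_subtype
  haveI : Fintype {m : Ideal A | m.IsMaximal} := Fintype.ofFinite _
  -- characters
  have hexists : ∀ m : {m : Ideal A | m.IsMaximal}, ∃ χ : A →ₐ[k] k,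
      RingHom.ker (χ : A →+* k) = m.1 := by
    intro m
    haveI hm : m.1.IsMaximal := m.2
    letI : Field (A ⧸ m.1) := Ideal.Quotient.field m.1
    haveI : Module.Finite k (A ⧸ m.1) :=
      Module.Finite.of_surjective (Ideal.Quotient.mkₐ k m.1).toLinearMap
        Ideal.Quotient.mk_surjective
    haveI : Algebra.IsIntegral k (A ⧸ m.1) := Algebra.IsIntegral.of_finite k _
    have hsurj : Function.Surjective (algebraMap k (A ⧸ m.1)) :=
      IsAlgClosed.algebraMap_bijective_of_isIntegral.2
    have hinj : Function.Injective (algebraMap k (A ⧸ m.1)) := (algebraMap k _).injective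
    let ψ : k ≃ₐ[k] (A ⧸ m.1) := AlgEquiv.ofBijective (Algebra.ofId k _) ⟨hinj, hsurj⟩
    refine ⟨(ψ.symm.toAlgHom).comp (Ideal.Quotient.mkₐ k m.1), ?_⟩
    ext x
    rw [RingHom.mem_ker]
    show ψ.symm (Ideal.Quotient.mk m.1 x) = 0 ↔ x ∈ m.1
    rw [map_eq_zero_iff _ ψ.symm.injective, Ideal.Quotient.eq_zero_iff_mem]
  choose χ hχ using hexists
  have hχinj : Function.Injective χ := by
    intro m m' h
    apply Subtype.ext
    rw [← hχ m, ← hχ m', h]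
  -- linear independence of characters
  have hli : LinearIndependent k (fun m : {m : Ideal A | m.IsMaximal} => (χ m).toLinearMap) :=
    (linearIndependent_toLinearMap k A k).comp χ hχinj
  have hcard_le : Fintype.card {m : Ideal A | m.IsMaximal} ≤ r := by
    have h1 := hli.fintype_card_le_finrank
    rwa [Subspace.dual_finrank_eq, hfinA] at h1
  -- the joint evaluation map
  let T : A →ₗ[k] ({m : Ideal A | m.IsMaximal} → k) :=
    LinearMap.pi (fun m => (χ m).toLinearMap)
  have hTinj : Function.Injective T := by
    rw [← LinearMap.ker_eq_bot]
    rw [Submodule.eq_bot_iff]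
    intro a ha
    rw [LinearMap.mem_ker] at ha
    have hmem : ∀ m : {m : Ideal A | m.IsMaximal}, a ∈ m.1 := by
      intro m
      rw [← hχ m, RingHom.mem_ker]
      exact congrFun ha m
    have hnil : IsNilpotent a := by
      rw [nilpotent_iff_mem_prime]
      intro J hJ
      haveI := (IsArtinianRing.isPrime_iff_isMaximal J).mp hJ
      exact hmem ⟨J, this⟩
    exact hnil.eq_zero
  have hr_le : r ≤ Fintype.card {m : Ideal A | m.IsMaximal} := by
    have h1 := LinearMap.finrank_le_finrank_of_injective hTinj
    rwa [hfinA, Module.finrank_pi] at h1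
  have hcard : Fintype.card {m : Ideal A | m.IsMaximal} = r := le_antisymm hcard_le hr_le
  have hTsurj : Function.Surjective T := by
    have heq : Module.finrank k A = Module.finrank k ({m : Ideal A | m.IsMaximal} → k) := by
      rw [hfinA, Module.finrank_pi, hcard]
    exact (LinearMap.injective_iff_surjective_of_finrank_eq_finrank heq).mp hTinj
  let Teq : A ≃ₗ[k] ({m : Ideal A | m.IsMaximal} → k) :=
    LinearEquiv.ofBijective T ⟨hTinj, hTsurj⟩
  let E : Fin r ≃ {m : Ideal A | m.IsMaximal} :=
    Fintype.equivOfCardEq (by rw [Fintype.card_fin, hcard])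
  let sgl : {m : Ideal A | m.IsMaximal} → ({m : Ideal A | m.IsMaximal} → k) :=
    fun m => Pi.single m 1
  -- lift Λ to A
  let π := (Ideal.Quotient.mkₐ k I).toLinearMap
  have hπsurj : Function.Surjective π := Ideal.Quotient.mk_surjective
  have hΛI : ∀ f ∈ I, Λ f = 0 := by
    intro f hf
    have := hf 1
    rwa [mul_one] at this
  obtain ⟨s, hs⟩ := π.exists_rightInverse_of_surjective
    (LinearMap.range_eq_top.mpr hπsurj)
  let μ : A →ₗ[k] k := Λ ∘ₗ s
  have hμ : ∀ f, μ (π f) = Λ f := by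
    intro f
    have hmem : s (π f) - f ∈ I := by
      have h1 : π (s (π f) - f) = 0 := by
        rw [map_sub]
        have h2 : π (s (π f)) = π f := congrFun (congrArg (DFunLike.coe) hs) (π f)
        rw [h2, sub_self]
      have h3 : Ideal.Quotient.mk I (s (π f) - f) = 0 := h1
      rwa [Ideal.Quotient.eq_zero_iff_mem] at h3
    have h4 := hΛI _ hmem
    rw [map_sub] at h4
    exact sub_eq_zero.mp h4
  -- points
  let Φ : Fin r → (MvPolynomial (Fin n) k →ₐ[k] k) :=
    fun i => (χ (E i)).comp (Ideal.Quotient.mkₐ k I)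
  let ζ : Fin r → (Fin n → k) := fun i t => Φ i (X t)
  have hΦ : ∀ i, (Φ i : MvPolynomial (Fin n) k →ₐ[k] k) = aeval (ζ i) := by
    intro i
    exact aeval_unique (Φ i)
  let lam : Fin r → k := fun i => μ (Teq.symm (sgl (E i)))
  have hevalD : ∀ (i) (f : MvPolynomial (Fin n) k),
      evalDual (ζ i) f = χ (E i) (Ideal.Quotient.mk I f) := by
    intro i f
    show aeval (ζ i) f = _
    rw [← hΦ i]
    rfl
  have hv : ∀ v : {m : Ideal A | m.IsMaximal} → k, v = ∑ m, v m • sgl m := by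
    intro v
    have h8 : ∀ m : {m : Ideal A | m.IsMaximal},
        v m • sgl m = Pi.single m (v m) := by
      intro m; rw [show sgl m = Pi.single m 1 from rfl, ← Pi.single_smul, smul_eq_mul, mul_one]
    simp_rw [h8]
    exact (Finset.univ_sum_single v).symm
  have hmain : Λ = ∑ i, lam i • evalDual (ζ i) := by
    apply LinearMap.ext
    intro f
    have step1 : Λ f = μ (Teq.symm (Teq (π f))) := by
      rw [Teq.symm_apply_apply]; exact (hμ f).symm
    have step2 : μ (Teq.symm (Teq (π f))) =
        ∑ m, (Teq (π f)) m * μ (Teq.symm (sgl m)) := by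
      conv_lhs => rw [hv (Teq (π f))]
      rw [map_sum, map_sum]
      apply Finset.sum_congr rfl
      intro m _
      rw [map_smul, map_smul, smul_eq_mul]
    have step3 : ∑ m, (Teq (π f)) m * μ (Teq.symm (sgl m)) =
        ∑ i, (Teq (π f)) (E i) * μ (Teq.symm (sgl (E i))) :=
      (Equiv.sum_comp E fun m => (Teq (π f)) m * μ (Teq.symm (sgl m))).symm
    rw [step1, step2, step3, LinearMap.sum_apply]
    apply Finset.sum_congr rfl
    intro i _
    rw [LinearMap.smul_apply, smul_eq_mul, hevalD i f, mul_comm]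
    rfl
  have hζinj : Function.Injective ζ := by
    intro i j hij
    have hΦij : Φ i = Φ j := by rw [hΦ i, hΦ j, hij]
    have hχij : χ (E i) = χ (E j) := by
      apply AlgHom.ext
      intro a
      obtain ⟨f, rfl⟩ := Ideal.Quotient.mk_surjective (I := I) a
      exact AlgHom.congr_fun hΦij f
    exact E.injective (hχinj hχij)
  have hlam : ∀ i, lam i ≠ 0 := by
    intro i h0
    obtain ⟨f, hf⟩ := hπsurj (Teq.symm (sgl (E i)))
    have hfI : f ∈ I := by
      rw [hI, mem_hankelKer_iff]
      intro g
      rw [hmain, LinearMap.sum_apply]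
      apply Finset.sum_eq_zero
      intro j _
      rw [LinearMap.smul_apply, smul_eq_mul, hevalD j (f*g), map_mul, map_mul]
      have hval : χ (E j) (Ideal.Quotient.mk I f) = sgl (E i) (E j) := by
        have hmk : Ideal.Quotient.mk I f = Teq.symm (sgl (E i)) := hf
        rw [hmk]
        have h9 : χ (E j) (Teq.symm (sgl (E i))) =
            Teq (Teq.symm (sgl (E i))) (E j) := rfl
        rw [h9, Teq.apply_symm_apply]
      by_cases hji : j = i
      · subst hji
        rw [h0, zero_mul]
      · rw [hval]
        simp only [sgl, Pi.single_apply]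
        rw [if_neg (fun h => hji (E.injective h)), zero_mul, mul_zero]
    have hmk0 : Ideal.Quotient.mk I f = 0 := (Ideal.Quotient.eq_zero_iff_mem).mpr hfI
    have ha : Teq.symm (sgl (E i)) = 0 := by rw [← hf]; exact hmk0
    have h11 : sgl (E i) = 0 := by
      have h12 := congrArg Teq ha
      rwa [Teq.apply_symm_apply, map_zero] at h12
    have h13 := congrFun h11 (E i)
    simp only [sgl, Pi.single_eq_same, Pi.zero_apply] at h13
    exact one_ne_zero h13
  exact ⟨ζ, lam, hζinj, hlam, hmain⟩

end Main

theorem stmt9 [Field k] [IsAlgClosed k] [CharZero k] {n r : ℕ}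
    (Λ : Module.Dual k (MvPolynomial (Fin n) k)) :
    (∃ (ζ : Fin r → (Fin n → k)) (lam : Fin r → k), Function.Injective ζ ∧
        (∀ i, lam i ≠ 0) ∧ Λ = ∑ i, lam i • evalDual (ζ i)) ↔
      (LinearMap.rank (hankelMap Λ) = r ∧ (hankelKer Λ).IsRadical) := by
  constructor
  · rintro ⟨ζ, lam, hinj, hlam, hΛ⟩
    exact forward_dir Λ ζ lam hinj hlam hΛ
  · rintro ⟨hrank, hrad⟩
    exact backward_dir Λ hrank hrad

end
end

section
/- Let F ∈ R^h_d be homogeneous of degree d with Waring rank r, and let Λ ∈ R* extend f* ∈ R_{≤d}* with Λ = Σᵢ₌₁^r λᵢ 𝟙_{ζᵢ} coming from a Waring decomposition. Then there is a monomial basis B of A_Λ = R/I_Λ such that every element of B is (the class of) a monomial of degree at most d. -/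
open MvPolynomial

noncomputable section

variable {k : Type*}

/-- Dehomogenization with respect to the variable `x₀`. -/
def dehom [CommSemiring k] {n : ℕ} (F : MvPolynomial (Fin (n+1)) k) :
    MvPolynomial (Fin n) k :=
  aeval (fun i => Fin.cases 1 X i) F

/-! ### Auxiliary lemmas -/

lemma aux_mem_hankelKer_iff [Field k] {n : ℕ} (Λ : Module.Dual k (MvPolynomial (Fin n) k))
    (f : MvPolynomial (Fin n) k) : f ∈ hankelKer Λ ↔ ∀ g, Λ (f * g) = 0 := Iff.rfl

def Lform [CommSemiring k] {n : ℕ} (v : Fin n → k) :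
    MvPolynomial (Fin (n+1)) k := X 0 + ∑ j, C (v j) * X j.succ

lemma Lform_hom [CommSemiring k] {n : ℕ} (v : Fin n → k) :
    (Lform v).IsHomogeneous 1 :=
  (isHomogeneous_X _ _).add (IsHomogeneous.sum _ _ _ fun j _ => isHomogeneous_C_mul_X _ _)

lemma dehom_Lform [CommSemiring k] {n : ℕ} (v : Fin n → k) :
    dehom (Lform v) = 1 + ∑ j, C (v j) * X j := by
  simp [dehom, Lform, algebraMap_eq]

lemma eval_Lform [CommSemiring k] {n : ℕ} (v : Fin n → k) (y : Fin (n+1) → k) :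
    eval y (Lform v) = y 0 + ∑ j, v j * y j.succ := by
  simp [Lform]

lemma aux_eval_smul {σ R : Type*} [Fintype σ] [CommRing R] {H : MvPolynomial σ R} {m : ℕ}
    (hH : H.IsHomogeneous m) (c : R) (y : σ → R) :
    eval (c • y) H = c ^ m * eval y H := by
  rw [eval_eq', eval_eq', Finset.mul_sum]
  apply Finset.sum_congr rfl
  intro α hα
  have hdeg : ∑ i, α i = m := by
    have h := hH (mem_support_iff.mp hα)
    simpa [Finsupp.weight_apply, Finsupp.sum_fintype] using h
  simp only [Pi.smul_apply, smul_eq_mul, mul_pow, Finset.prod_mul_distrib,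
    Finset.prod_pow_eq_pow_sum, hdeg]
  ring

lemma aux_eval_dehom [CommRing k] {n : ℕ} (H : MvPolynomial (Fin (n+1)) k)
    (z : Fin (n+1) → k) (hz : z 0 = 1) :
    eval z H = eval (fun j => z j.succ) (dehom H) := by
  have h : (eval (fun j : Fin n => z j.succ)).comp
      ((aeval (fun i => Fin.cases 1 X i) : MvPolynomial (Fin (n+1)) k →ₐ[k]
        MvPolynomial (Fin n) k) : MvPolynomial (Fin (n+1)) k →+* MvPolynomial (Fin n) k)
      = eval z := by
    apply ringHom_ext
    · intro a; simp
    · intro i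
      induction i using Fin.cases with
      | zero => simp [hz]
      | succ j => simp
  have := congrArg (fun φ : MvPolynomial (Fin (n+1)) k →+* k => φ H) h
  simpa [dehom] using this.symm

lemma aux_dehom_inj [Field k] [Infinite k] {n d : ℕ}
    {H : MvPolynomial (Fin (n+1)) k} (hH : H.IsHomogeneous d) (h0 : dehom H = 0) :
    H = 0 := by
  have key : ∀ y : Fin (n+1) → k, y 0 * eval y H = 0 := by
    intro y
    by_cases hy : y 0 = 0
    · simp [hy]
    · set z : Fin (n+1) → k := (y 0)⁻¹ • y with hzdef
      have hz0 : z 0 = 1 := by simp [hzdef, inv_mul_cancel₀ hy]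
      have hyz : y = (y 0) • z := by rw [hzdef, smul_inv_smul₀ hy]
      have : eval y H = (y 0) ^ d * eval z H := by
        conv_lhs => rw [hyz]
        exact aux_eval_smul hH _ _
      rw [this, aux_eval_dehom H z hz0, h0]
      simp
  have hX : (X 0 : MvPolynomial (Fin (n+1)) k) * H = 0 := by
    apply MvPolynomial.funext
    intro y
    simpa using key y
  rcases mul_eq_zero.mp hX with h | h
  · exact absurd h (X_ne_zero 0)
  · exact h

lemma aux_decF [Field k] [Infinite k] {n d r : ℕ}
    {F : MvPolynomial (Fin (n+1)) k} (hF : F.IsHomogeneous d)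
    (lam : Fin r → k) (ζ : Fin r → (Fin n → k))
    (hdec : dehom F =
      ∑ i, lam i • ((1 : MvPolynomial (Fin n) k) + ∑ j, C (ζ i j) * X j) ^ d) :
    F = ∑ i, lam i • (Lform (ζ i)) ^ d := by
  set G : MvPolynomial (Fin (n+1)) k := ∑ i, lam i • (Lform (ζ i)) ^ d with hGdef
  have hG : G.IsHomogeneous d := by
    apply IsHomogeneous.sum
    intro i _
    rw [smul_eq_C_mul]
    have := ((Lform_hom (ζ i)).pow d).C_mul (lam i)
    simpa using this
  have hdG : dehom G = dehom F := by
    rw [hdec, hGdef]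
    simp only [dehom]
    rw [map_sum]
    congr 1
    funext i
    rw [map_smul, map_pow]
    congr 2
    have := dehom_Lform (ζ i)
    simpa [dehom] using this
  have hsub : (F - G).IsHomogeneous d := hF.sub hG
  have hz : dehom (F - G) = 0 := by
    unfold dehom at hdG ⊢
    rw [map_sub, hdG, sub_self]
  exact sub_eq_zero.mp (aux_dehom_inj hsub hz)

lemma aux_c_zero [Field k] [Infinite k] {n d r : ℕ}
    {F : MvPolynomial (Fin (n+1)) k} (hF : F.IsHomogeneous d)
    (lam : Fin r → k) (ζ : Fin r → (Fin n → k))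
    (hdec : dehom F =
      ∑ i, lam i • ((1 : MvPolynomial (Fin n) k) + ∑ j, C (ζ i j) * X j) ^ d)
    (hmin : ∀ (r' : ℕ) (lam' : Fin r' → k) (L : Fin r' → MvPolynomial (Fin (n+1)) k),
        (∀ i, (L i).IsHomogeneous 1) → F = ∑ i, lam' i • L i ^ d → r ≤ r')
    (c : Fin r → k)
    (hc : ∀ g : MvPolynomial (Fin n) k, g.totalDegree ≤ d →
      ∑ i, c i * aeval (ζ i) g = 0) :
    c = 0 := by
  by_contra hc0
  obtain ⟨j, hcj⟩ := Function.ne_iff.mp hc0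
  simp only [Pi.zero_apply] at hcj
  have hP : (∑ i, c i • (Lform (ζ i)) ^ d : MvPolynomial (Fin (n+1)) k) = 0 := by
    apply MvPolynomial.funext
    intro y
    have hg : ((C (y 0) + ∑ j : Fin n, X j * C (y j.succ) : MvPolynomial (Fin n) k) ^ d).totalDegree ≤ d := by
      refine (totalDegree_pow _ _).trans ?_
      have hbase : (C (y 0) + ∑ j : Fin n, X j * C (y j.succ) : MvPolynomial (Fin n) k).totalDegree ≤ 1 := by
        refine (totalDegree_add _ _).trans ?_
        apply max_le
        · simp [totalDegree_C]
        · refine (totalDegree_finset_sum _ _).trans ?_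
          apply Finset.sup_le
          intro b _
          refine (totalDegree_mul _ _).trans ?_
          simp [totalDegree_C, totalDegree_X]
      calc d * (C (y 0) + ∑ j : Fin n, X j * C (y j.succ) : MvPolynomial (Fin n) k).totalDegree
          ≤ d * 1 := Nat.mul_le_mul_left d hbase
        _ = d := by ring
    have h0 := hc _ hg
    have heval : ∀ i, aeval (ζ i) ((C (y 0) + ∑ j : Fin n, X j * C (y j.succ) : MvPolynomial (Fin n) k) ^ d)
        = (eval y (Lform (ζ i))) ^ d := by
      intro i
      rw [eval_Lform]
      simp [Algebra.algebraMap_self]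
    rw [map_sum, map_zero]
    simp only [smul_eq_C_mul, map_mul, map_pow, eval_C]
    calc ∑ i, c i * eval y (Lform (ζ i)) ^ d
        = ∑ i, c i * aeval (ζ i) ((C (y 0) + ∑ j : Fin n, X j * C (y j.succ) : MvPolynomial (Fin n) k) ^ d) := by
          apply Finset.sum_congr rfl; intro i _; rw [heval]
      _ = 0 := h0
  have hr : r ≠ 0 := by rintro rfl; exact j.elim0
  obtain ⟨m, rfl⟩ := Nat.exists_eq_succ_of_ne_zero hr
  have hFdec := aux_decF hF lam ζ hdec
  have key : F = ∑ i, (lam i - lam j / c j * c i) • Lform (ζ i) ^ d := by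
    have h1 : ∑ i, (lam j / c j * c i) • Lform (ζ i) ^ d
        = (lam j / c j) • ∑ i, c i • Lform (ζ i) ^ d := by
      rw [Finset.smul_sum]
      apply Finset.sum_congr rfl
      intro i _
      rw [smul_smul]
    simp only [sub_smul, Finset.sum_sub_distrib, h1, hP, smul_zero, sub_zero]
    exact hFdec
  have key2 : F = ∑ i : Fin m, (fun i => lam (j.succAbove i) - lam j / c j * c (j.succAbove i)) i
      • (fun i => Lform (ζ (j.succAbove i))) i ^ d := by
    rw [key, Fin.sum_univ_succAbove _ j]
    rw [div_mul_cancel₀ _ hcj, sub_self, zero_smul, zero_add]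
  have := hmin m _ _ (fun i => Lform_hom _) key2
  omega

lemma aux_dedekind [Field k] {n r : ℕ} (ζ : Fin r → (Fin n → k))
    (hζ : Function.Injective ζ) (v : Fin r → k)
    (hv : ∀ g : MvPolynomial (Fin n) k, ∑ i, v i * aeval (ζ i) g = 0) : v = 0 := by
  set χ : Fin r → (MvPolynomial (Fin n) k →* k) :=
    fun i => ((aeval (ζ i) : MvPolynomial (Fin n) k →ₐ[k] k) :
      MvPolynomial (Fin n) k →+* k).toMonoidHom with hχ
  have hinj : Function.Injective χ := by
    intro i i' h
    apply hζ
    funext l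
    have := congrArg (fun φ : MvPolynomial (Fin n) k →* k => φ (X l)) h
    simpa [hχ] using this
  have li : LinearIndependent k (fun i => ⇑(χ i)) :=
    (linearIndependent_monoidHom (MvPolynomial (Fin n) k) k).comp χ hinj
  have h0 : ∑ i, v i • ⇑(χ i) = 0 := by
    funext g
    simpa [hχ] using hv g
  funext i
  exact Fintype.linearIndependent_iff.mp li v h0 i

lemma aux_extend [Field k] {n r d : ℕ} (ζ : Fin r → (Fin n → k)) (c : Fin r → k)
    (hmono : ∀ α : Fin n →₀ ℕ, (α.sum fun _ m => m) ≤ d →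
      ∑ i, c i * aeval (ζ i) (monomial α (1 : k)) = 0) :
    ∀ g : MvPolynomial (Fin n) k, g.totalDegree ≤ d → ∑ i, c i * aeval (ζ i) g = 0 := by
  intro g hg
  calc ∑ i, c i * aeval (ζ i) g
      = ∑ i, ∑ α ∈ g.support, coeff α g * (c i * aeval (ζ i) (monomial α (1:k))) := by
        apply Finset.sum_congr rfl
        intro i _
        conv_lhs => rw [g.as_sum]
        rw [map_sum, Finset.mul_sum]
        apply Finset.sum_congr rfl
        intro α _
        have : monomial α (coeff α g) = C (coeff α g) * monomial α (1:k) := by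
          rw [C_mul_monomial, mul_one]
        rw [this, map_mul]
        simp [Algebra.algebraMap_self]
        ring
    _ = ∑ α ∈ g.support, coeff α g * ∑ i, c i * aeval (ζ i) (monomial α (1:k)) := by
        rw [Finset.sum_comm]
        simp [Finset.mul_sum]
    _ = 0 := by
        apply Finset.sum_eq_zero
        intro α hα
        rw [hmono α ((le_totalDegree hα).trans hg), mul_zero]

theorem stmt11 [Field k] [IsAlgClosed k] [CharZero k] {n d r : ℕ}
    (F : MvPolynomial (Fin (n+1)) k) (hF : F.IsHomogeneous d)
    (lam : Fin r → k) (ζ : Fin r → (Fin n → k))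
    (hlam : ∀ i, lam i ≠ 0) (hζ : Function.Injective ζ)
    (hdec : dehom F =
      ∑ i, lam i • ((1 : MvPolynomial (Fin n) k) + ∑ j, C (ζ i j) * X j) ^ d)
    (hmin : ∀ (r' : ℕ) (lam' : Fin r' → k) (L : Fin r' → MvPolynomial (Fin (n+1)) k),
        (∀ i, (L i).IsHomogeneous 1) → F = ∑ i, lam' i • L i ^ d → r ≤ r')
    (Λ : Module.Dual k (MvPolynomial (Fin n) k))
    (hΛ : Λ = ∑ i, lam i • evalDual (ζ i)) :
    ∃ B : Fin r → (Fin n →₀ ℕ),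
      (∀ i, ((B i).sum fun _ m => m) ≤ d) ∧
      (LinearIndependent k fun i =>
        Ideal.Quotient.mk (hankelKer Λ) (monomial (B i) (1 : k))) ∧
      Submodule.span k (Set.range fun i =>
        Ideal.Quotient.mk (hankelKer Λ) (monomial (B i) (1 : k))) = ⊤ := by
  classical
  -- membership in the Hankel kernel is vanishing at the points
  have hEmem : ∀ f : MvPolynomial (Fin n) k,
      f ∈ hankelKer Λ ↔ ∀ i, aeval (ζ i) f = 0 := by
    intro f
    constructor
    · intro hf i
      have hv : ∀ g : MvPolynomial (Fin n) k,
          ∑ i', (lam i' * aeval (ζ i') f) * aeval (ζ i') g = 0 := by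
        intro g
        have h1 := hf g
        rw [hΛ] at h1
        simpa [evalDual, LinearMap.sum_apply, LinearMap.smul_apply, smul_eq_mul,
          map_mul, mul_assoc] using h1
      have h2 := aux_dedekind ζ hζ _ hv
      have h3 := congrFun h2 i
      simp only [Pi.zero_apply] at h3
      rcases mul_eq_zero.mp h3 with h | h
      · exact absurd h (hlam i)
      · exact h
    · intro h g
      rw [hΛ]
      simp only [LinearMap.sum_apply, LinearMap.smul_apply, evalDual,
        AlgHom.toLinearMap_apply, map_mul, smul_eq_mul]
      apply Finset.sum_eq_zero
      intro i _
      rw [h i, zero_mul, mul_zero]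
  -- the evaluation vectors of small monomials span k^r
  set S : Set (Fin r → k) := {w | ∃ α : Fin n →₀ ℕ, (α.sum fun _ m => m) ≤ d ∧
    w = fun i => aeval (ζ i) (monomial α (1:k))} with hSdef
  have hspan : Submodule.span k S = ⊤ := by
    by_contra hne
    obtain ⟨φ, hφ0, hφ⟩ := Submodule.exists_dual_map_eq_bot_of_lt_top
      (lt_top_iff_ne_top.mpr hne) inferInstance
    set c : Fin r → k := fun i => φ (fun j => if i = j then (1:k) else 0) with hcdef
    have hφ_eq : ∀ w : Fin r → k, φ w = ∑ i, w i * c i := by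
      intro w
      conv_lhs => rw [pi_eq_sum_univ w]
      rw [map_sum]
      apply Finset.sum_congr rfl
      intro i _
      rw [map_smul, hcdef, smul_eq_mul]
    have hmono : ∀ α : Fin n →₀ ℕ, (α.sum fun _ m => m) ≤ d →
        ∑ i, c i * aeval (ζ i) (monomial α (1:k)) = 0 := by
      intro α hα
      have hw : (fun i => aeval (ζ i) (monomial α (1:k))) ∈ S := ⟨α, hα, rfl⟩
      have hmem : φ (fun i => aeval (ζ i) (monomial α (1:k))) ∈
          Submodule.map φ (Submodule.span k S) :=
        Submodule.mem_map_of_mem (Submodule.subset_span hw)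
      rw [hφ] at hmem
      have hz := (Submodule.mem_bot k).mp hmem
      rw [hφ_eq] at hz
      rw [← hz]
      apply Finset.sum_congr rfl
      intro i _
      ring
    have hc0 := aux_c_zero hF lam ζ hdec hmin c (aux_extend ζ c hmono)
    apply hφ0
    apply LinearMap.ext
    intro w
    rw [hφ_eq, hc0]
    simp
  obtain ⟨b, hbS, hbspan, hbli⟩ := exists_linearIndependent k S
  rw [hspan] at hbspan
  have bas : Module.Basis b k (Fin r → k) := Module.Basis.mk hbli (by
    rw [Subtype.range_coe, hbspan])
  have hfin : b.Finite := hbli.setFinite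
  have : Fintype b := hfin.fintype
  have hcard : Fintype.card b = r := by
    have h1 := Module.finrank_eq_card_basis bas
    rw [Module.finrank_fin_fun] at h1
    exact h1.symm
  let σ : Fin r ≃ b := (Fintype.equivFinOfCardEq hcard).symm
  have hchoice : ∀ i : Fin r, ∃ α : Fin n →₀ ℕ, (α.sum fun _ m => m) ≤ d ∧
      ((σ i : Fin r → k)) = fun i' => aeval (ζ i') (monomial α (1:k)) :=
    fun i => hbS (σ i).2
  choose B hB1 hB2 using hchoice
  set vB : Fin r → (Fin r → k) := fun i i' => aeval (ζ i') (monomial (B i) (1:k)) with hvBdef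
  have hvB : ∀ i, vB i = (σ i : Fin r → k) := fun i => (hB2 i).symm
  have livB : LinearIndependent k vB := by
    have h1 : LinearIndependent k (fun i : Fin r => ((σ i : Fin r → k))) :=
      hbli.comp σ σ.injective
    rwa [show (fun i : Fin r => ((σ i : Fin r → k))) = vB from funext fun i => (hvB i).symm]
      at h1
  have spanvB : Submodule.span k (Set.range vB) = ⊤ := by
    have hrange : Set.range vB = b := by
      have h1 : Set.range vB = Set.range (fun i : Fin r => ((σ i : Fin r → k))) := by
        ext w
        simp only [Set.mem_range]
        constructor
        · rintro ⟨i, rfl⟩; exact ⟨i, (hvB i).symm⟩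
        · rintro ⟨i, rfl⟩; exact ⟨i, hvB i⟩
      rw [h1]
      have h2 : Set.range (fun i : Fin r => ((σ i : Fin r → k))) =
          Subtype.val '' (Set.range σ) := by
        rw [← Set.range_comp]; rfl
      rw [h2, Equiv.range_eq_univ, Set.image_univ, Subtype.range_coe]
    rw [hrange, hbspan]
  refine ⟨B, hB1, ?_, ?_⟩
  · -- linear independence in the quotient
    rw [Fintype.linearIndependent_iff]
    intro g hg i
    have hq : (Ideal.Quotient.mkₐ k (hankelKer Λ)) (∑ i', g i' • monomial (B i') (1:k)) = 0 := by
      rw [map_sum]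
      simp only [map_smul, Ideal.Quotient.mkₐ_eq_mk]
      exact hg
    rw [Ideal.Quotient.mkₐ_eq_mk, Ideal.Quotient.eq_zero_iff_mem] at hq
    have hev := (hEmem _).mp hq
    have hsum : ∑ i', g i' • vB i' = 0 := by
      funext i''
      have h1 := hev i''
      rw [map_sum] at h1
      simp only [map_smul, smul_eq_mul] at h1
      simp only [Finset.sum_apply, Pi.smul_apply, Pi.zero_apply, smul_eq_mul, hvBdef]
      exact h1
    exact Fintype.linearIndependent_iff.mp livB g hsum i
  · -- spanning
    rw [eq_top_iff]
    rintro x -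
    obtain ⟨f, rfl⟩ := Ideal.Quotient.mk_surjective x
    have hmem : (fun i' => aeval (ζ i') f) ∈ Submodule.span k (Set.range vB) := by
      rw [spanvB]; trivial
    rw [Submodule.mem_span_range_iff_exists_fun] at hmem
    obtain ⟨cc, hcc⟩ := hmem
    have hker : f - ∑ i, cc i • monomial (B i) (1:k) ∈ hankelKer Λ := by
      rw [hEmem]
      intro i'
      have h1 := congrFun hcc i'
      rw [map_sub, map_sum]
      simp only [map_smul, smul_eq_mul]
      simp only [Finset.sum_apply, Pi.smul_apply, smul_eq_mul, hvBdef] at h1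
      rw [sub_eq_zero, ← h1]
    have heq : Ideal.Quotient.mk (hankelKer Λ) f =
        ∑ i, cc i • Ideal.Quotient.mk (hankelKer Λ) (monomial (B i) (1:k)) := by
      have h2 : Ideal.Quotient.mk (hankelKer Λ) (f - ∑ i, cc i • monomial (B i) (1:k)) = 0 :=
        Ideal.Quotient.eq_zero_iff_mem.mpr hker
      rw [map_sub, sub_eq_zero] at h2
      rw [h2]
      rw [← Ideal.Quotient.mkₐ_eq_mk (R₁ := k), map_sum]
      simp only [map_smul, Ideal.Quotient.mkₐ_eq_mk]
    rw [heq]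
    exact Submodule.sum_mem _ fun i _ =>
      Submodule.smul_mem _ _ (Submodule.subset_span ⟨i, rfl⟩)

end
end

section
/- Let I ⊆ R = k[x₁,...,xₙ] be a zero-dimensional ideal with V(I) = {ζ₁,...,ζ_d} and minimal primary decomposition I = Q₁ ∩ ... ∩ Q_d where Qᵢ is primary to the maximal ideal m_{ζᵢ}. Then the apolar set satisfies I^⊥ = Q₁^⊥ ⊕ ... ⊕ Q_d^⊥ (internal direct sum inside R*). Moreover if I is radical, every Λ ∈ I^⊥ is a k-linear combination of the evaluation functionals 𝟙_{ζ₁},...,𝟙_{ζ_d}. -/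
open MvPolynomial

noncomputable section

variable {k : Type*}

lemma aux_mem_span [CommRing k] {n : ℕ} (a : Fin n → k) (p : MvPolynomial (Fin n) k) :
    p - C (eval a p) ∈ Ideal.span (Set.range fun j => X j - C (a j)) := by
  induction p using MvPolynomial.induction_on with
  | C c => simp
  | add p q hp hq =>
    have := add_mem hp hq
    convert this using 1
    simp only [map_add]
    ring
  | mul_X p j hp =>
    have h1 : (X j - C (a j) : MvPolynomial (Fin n) k) ∈
        Ideal.span (Set.range fun j => X j - C (a j)) :=
      Ideal.subset_span ⟨j, rfl⟩
    have := add_mem (Ideal.mul_mem_left _ p h1) (Ideal.mul_mem_right (C (a j)) _ hp)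
    convert this using 1
    rw [eval_mul, eval_X, map_mul]
    ring

lemma aux_span_sup_top [Field k] {n : ℕ} {a b : Fin n → k} (h : a ≠ b) :
    Ideal.span (Set.range fun j => X j - C (a j)) ⊔
      Ideal.span (Set.range fun j => X j - C (b j)) = ⊤ := by
  obtain ⟨l, hl⟩ : ∃ l, a l ≠ b l := by
    by_contra h'; push_neg at h'; exact h (funext h')
  rw [Ideal.eq_top_iff_one]
  have h1 : (X l - C (a l) : MvPolynomial (Fin n) k) ∈
      Ideal.span (Set.range fun j => X j - C (a j)) ⊔
        Ideal.span (Set.range fun j => X j - C (b j)) :=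
    Submodule.mem_sup_left (Ideal.subset_span ⟨l, rfl⟩)
  have h2 : (X l - C (b l) : MvPolynomial (Fin n) k) ∈
      Ideal.span (Set.range fun j => X j - C (a j)) ⊔
        Ideal.span (Set.range fun j => X j - C (b j)) :=
    Submodule.mem_sup_right (Ideal.subset_span ⟨l, rfl⟩)
  have h3 : (C (b l - a l) : MvPolynomial (Fin n) k) ∈
      Ideal.span (Set.range fun j => X j - C (a j)) ⊔
        Ideal.span (Set.range fun j => X j - C (b j)) := by
    have := sub_mem h1 h2
    convert this using 1
    rw [map_sub]
    ring
  have hone : (1 : MvPolynomial (Fin n) k) = C ((b l - a l)⁻¹) * C (b l - a l) := by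
    rw [← map_mul, inv_mul_cancel₀ (sub_ne_zero.2 (Ne.symm hl)), map_one]
  rw [hone]
  exact Ideal.mul_mem_left _ _ h3

lemma aux_eval [Field k] {n : ℕ} {a : Fin n → k}
    {Λ : Module.Dual k (MvPolynomial (Fin n) k)}
    (h : Λ ∈ Submodule.dualAnnihilator (Submodule.restrictScalars k
      (Ideal.span (Set.range fun j => X j - C (a j))))) :
    Λ = Λ 1 • evalDual a := by
  rw [Submodule.mem_dualAnnihilator] at h
  refine LinearMap.ext fun p => ?_
  have h1 : Λ (p - C (eval a p)) = 0 := h _ (aux_mem_span a p)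
  rw [map_sub, sub_eq_zero] at h1
  have h2 : (C (eval a p) : MvPolynomial (Fin n) k) = (eval a p) • 1 := C_eq_smul_one
  rw [h1, h2, map_smul]
  have h3 : (evalDual a) p = eval a p := RingHom.congr_fun (coe_aeval_eq_eval a) p
  simp [h3, mul_comm]

lemma aux_rad_iInf {R : Type*} [CommSemiring R] {d : ℕ} (Q : Fin d → Ideal R) :
    (⨅ i, Q i).radical = ⨅ i, (Q i).radical := by
  have h1 : (⨅ i, Q i) = Finset.univ.inf Q := by simp [Finset.inf_eq_iInf]
  have h2 : (⨅ i, (Q i).radical) = Finset.univ.inf (fun i => (Q i).radical) := by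
    simp [Finset.inf_eq_iInf]
  rw [h1, h2, ← Ideal.radicalInfTopHom_apply, map_finset_inf]
  rfl

lemma aux_res_iInf [Field k] {n : ℕ} {ι : Type*} (J : ι → Ideal (MvPolynomial (Fin n) k)) :
    Submodule.restrictScalars k (⨅ i, J i) = ⨅ i, Submodule.restrictScalars k (J i) := by
  ext x
  simp [Submodule.mem_iInf]

theorem stmt17 [Field k] [IsAlgClosed k] [CharZero k] {n d : ℕ}
    (I : Ideal (MvPolynomial (Fin n) k))
    (hfin : FiniteDimensional k (MvPolynomial (Fin n) k ⧸ I))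
    (ζ : Fin d → (Fin n → k)) (hζ : Function.Injective ζ)
    (hV : {x : Fin n → k | ∀ f ∈ I, eval x f = 0} = Set.range ζ)
    (Q : Fin d → Ideal (MvPolynomial (Fin n) k))
    (hQ : ∀ i, (Q i).IsPrimary)
    (hQrad : ∀ i, (Q i).radical =
        Ideal.span (Set.range fun j => X j - C (ζ i j)))
    (hI : I = ⨅ i, Q i) :
    (Submodule.dualAnnihilator (Submodule.restrictScalars k I) =
        ⨆ i, Submodule.dualAnnihilator (Submodule.restrictScalars k (Q i))) ∧
    (iSupIndep fun i =>
        Submodule.dualAnnihilator (Submodule.restrictScalars k (Q i))) ∧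
    (I.IsRadical → ∀ Λ ∈ Submodule.dualAnnihilator (Submodule.restrictScalars k I),
        ∃ c : Fin d → k, Λ = ∑ i, c i • evalDual (ζ i)) := by
  classical
  -- pairwise comaximality of the Q i
  have hQtop : ∀ i j : Fin d, i ≠ j → Q i ⊔ Q j = ⊤ := by
    intro i j hij
    have hrad : (Q i ⊔ Q j).radical = ⊤ := by
      rw [Ideal.radical_sup, hQrad i, hQrad j,
        aux_span_sup_top (fun h => hij (hζ h)), Ideal.radical_top]
    exact Ideal.radical_eq_top.mp hrad
  refine ⟨?_, ?_, ?_⟩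
  · rw [hI, aux_res_iInf, Subspace.dualAnnihilator_iInf_eq]
  · intro i
    rw [Submodule.disjoint_def]
    intro Λ hΛ1 hΛ2
    -- Λ vanishes on Q i and on ⨅ (j ≠ i), Q j
    rw [Submodule.mem_dualAnnihilator] at hΛ1
    have hKtop : Q i ⊔ (⨅ j ∈ Finset.univ.erase i, Q j) = ⊤ := by
      apply Ideal.sup_iInf_eq_top
      intro j hj
      exact hQtop i j (Ne.symm (Finset.mem_erase.mp hj).1)
    have hΛ2' : ∀ x ∈ ⨅ j ∈ Finset.univ.erase i, Q j, Λ x = 0 := by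
      have hle : (⨆ j, ⨆ (_ : j ≠ i),
          Submodule.dualAnnihilator (Submodule.restrictScalars k (Q j))) ≤
          Submodule.dualAnnihilator (Submodule.restrictScalars k
            (⨅ j ∈ Finset.univ.erase i, Q j)) := by
        refine iSup_le fun j => iSup_le fun hj => ?_
        intro μ hμ
        rw [Submodule.mem_dualAnnihilator] at hμ ⊢
        intro x hx
        apply hμ
        have : (⨅ j ∈ Finset.univ.erase i, Q j) ≤ Q j :=
          biInf_le _ (Finset.mem_erase.mpr ⟨hj, Finset.mem_univ j⟩)
        exact this hx
      have := hle hΛ2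
      rw [Submodule.mem_dualAnnihilator] at this
      exact this
    -- 1 = a + b with a ∈ Q i, b ∈ ⨅
    obtain ⟨a, ha, b, hb, hab⟩ := Submodule.mem_sup.mp
      (hKtop ▸ Submodule.mem_top (x := (1 : MvPolynomial (Fin n) k)))
    refine LinearMap.ext fun x => ?_
    have hx : x = x * a + x * b := by rw [← mul_add, hab, mul_one]
    rw [LinearMap.zero_apply, hx, map_add, hΛ1 _ (Ideal.mul_mem_left _ x ha),
      hΛ2' _ (Ideal.mul_mem_left _ x hb), add_zero]
  · intro hrad Λ hΛ
    have hI2 : I = ⨅ i, Ideal.span (Set.range fun j => X j - C (ζ i j)) := by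
      conv_lhs => rw [← hrad.radical, hI, aux_rad_iInf]
      exact iInf_congr hQrad
    rw [hI2, aux_res_iInf, Subspace.dualAnnihilator_iInf_eq,
      Submodule.mem_iSup_iff_exists_finsupp] at hΛ
    obtain ⟨f, hf, hsum⟩ := hΛ
    refine ⟨fun i => f i 1, ?_⟩
    rw [← hsum, Finsupp.sum_fintype _ _ (fun i => rfl)]
    exact Finset.sum_congr rfl fun i _ => aux_eval (hf i)
end
end
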